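/- Correlation-connectivity identity: for the 2-state Potts model at inverse temperature 2β with field h on a finite graph G=(V,E) and distinct x,y ∈ V, τ_{2β,h,2,V}(x,y) = (1/2) φ_{p,h,G}(x ↔ y) + (1/2) φ_{p,h,G}( 1_{{x ↮ y}} · tanh(h(K_t)) · tanh(h(K_u)) ), where τ(x,y) = π_{2β,h,2,V}(σ̂_x = σ̂_y) - 1/2, K_t and K_u are the (random) connected components of x and y, and h(K) = β Σ_{i∈K} h_i. -/

import Mathlib

open Finset

noncomputable section

variable {V : Type}

/-- The spin value (±1) attached to a Boolean spin (`true ↔ +1`, `false ↔ -1`). -/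
def spin (b : Bool) : ℝ := if b then 1 else -1

/-- The subgraph of `G` whose open edges are the edges in `F`. -/
def openSub (G : SimpleGraph V) (F : Finset (Sym2 V)) : SimpleGraph V where
  Adj i j := G.Adj i j ∧ s(i, j) ∈ F
  symm := by
    constructor
    intro i j h
    exact ⟨h.1.symm, by rw [Sym2.eq_swap]; exact h.2⟩
  loopless := ⟨fun i h => G.irrefl h.1⟩

instance [Fintype V] (H : SimpleGraph V) : Fintype H.ConnectedComponent := by
  classical exact Fintype.ofSurjective H.connectedComponentMk Quot.exists_rep

/-- The vertex set of a connected component, as a `Finset`. -/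
def compSupp [Fintype V] (H : SimpleGraph V) (c : H.ConnectedComponent) : Finset V := by
  classical exact Finset.univ.filter fun v => H.connectedComponentMk v = c

/-- Kronecker delta `δ_{σ_i,σ_j}` of a configuration on an (unordered) edge. -/
def eDelta {S : Type} [DecidableEq S] (σ : V → S) : Sym2 V → ℝ :=
  Sym2.lift ⟨fun i j => if σ i = σ j then 1 else 0, fun _ _ => by simp [eq_comm]⟩

/-- Product of spins `σ_i σ_j` on an (unordered) edge. -/
def eProd (σ : V → Bool) : Sym2 V → ℝ :=
  Sym2.lift ⟨fun i j => spin (σ i) * spin (σ j), fun _ _ => mul_comm _ _⟩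

/-- The consistency indicator `Δ(σ,ω)`: equal to `1` iff `σ` is constant on
every open edge of the configuration `F`. -/
def Delta (G : SimpleGraph V) (F : Finset (Sym2 V)) (σ : V → Bool) : ℝ := by
  classical exact if ∀ i j, G.Adj i j → s(i, j) ∈ F → σ i = σ j then 1 else 0

/-- The Bernoulli factor `B_J(ω) = ∏_{e open} p_e ∏_{e closed} (1-p_e)`. -/
def bern [Fintype V] [DecidableEq V] (G : SimpleGraph V) [DecidableRel G.Adj]
    (p : Sym2 V → ℝ) (F : Finset (Sym2 V)) : ℝ :=
  (∏ e ∈ F, p e) * ∏ e ∈ G.edgeFinset \ F, (1 - p e)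

/-- The (unnormalized) 2-state Potts Boltzmann weight at inverse temperature
`2β`, with states `Fin 2` (`0 ↔` state `1`, `1 ↔` state `2`). -/
def pottsW2 [Fintype V] [DecidableEq V] (G : SimpleGraph V) [DecidableRel G.Adj]
    (β : ℝ) (J : Sym2 V → ℝ) (h : V → ℝ) (τ : V → Fin 2) : ℝ :=
  Real.exp (-(2 * β) *
    (-(∑ e ∈ G.edgeFinset, J e * eDelta τ e)
      - ∑ i, h i / 2 * ((if τ i = 0 then (1 : ℝ) else 0) - if τ i = 1 then 1 else 0)))

/-- The random-cluster weight `B_J(ω) ∏_α 2cosh(β Σ_{i∈K_α} h_i)`. -/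
def rcW [Fintype V] [DecidableEq V] (G : SimpleGraph V) [DecidableRel G.Adj]
    (β : ℝ) (p : Sym2 V → ℝ) (h : V → ℝ) (F : Finset (Sym2 V)) : ℝ :=
  bern G p F * ∏ c : (openSub G F).ConnectedComponent,
    2 * Real.cosh (β * ∑ i ∈ compSupp (openSub G F) c, h i)

/-- Expectation of `f` under the random-cluster measure with external field. -/
def rcE [Fintype V] [DecidableEq V] (G : SimpleGraph V) [DecidableRel G.Adj]
    (β : ℝ) (p : Sym2 V → ℝ) (h : V → ℝ) (f : Finset (Sym2 V) → ℝ) : ℝ :=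
  (∑ F ∈ G.edgeFinset.powerset, f F * rcW G β p h F) /
    ∑ F ∈ G.edgeFinset.powerset, rcW G β p h F

/-- `h(K_z) = β Σ_{i ∈ K_z} h_i`, where `K_z` is the connected component of `z`
in the configuration `F`. -/
def hK [Fintype V] [DecidableEq V] (G : SimpleGraph V) (β : ℝ) (h : V → ℝ)
    (F : Finset (Sym2 V)) (z : V) : ℝ :=
  β * ∑ i ∈ compSupp (openSub G F) ((openSub G F).connectedComponentMk z), h i


section ESaux
open scoped Classical
variable {V : Type} [Fintype V] [DecidableEq V]

lemma eDelta_mk {S : Type} [DecidableEq S] (σ : V → S) (i j : V) :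
    eDelta σ s(i, j) = if σ i = σ j then 1 else 0 := rfl

lemma sum_exp_spin (w : ℝ) : ∑ b : Bool, Real.exp (spin b * w) = 2 * Real.cosh w := by
  simp [spin, Real.cosh_eq]
  ring

lemma sum_spin_exp (w : ℝ) :
    ∑ b : Bool, spin b * Real.exp (spin b * w) = 2 * Real.sinh w := by
  simp [spin, Real.sinh_eq]
  ring

lemma sigma_const_of {G : SimpleGraph V} {F : Finset (Sym2 V)} {σ : V → Bool}
    (hσ : ∀ i j, G.Adj i j → s(i, j) ∈ F → σ i = σ j) {v w : V}
    (hr : (openSub G F).Reachable v w) : σ v = σ w := by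
  obtain ⟨q⟩ := hr
  induction q with
  | nil => rfl
  | cons ha _ ih => exact (hσ _ _ ha.1 ha.2).trans ih

/-- Sum over spin configurations weighted by the consistency indicator equals
the sum over component spin assignments. -/
lemma sum_delta (G : SimpleGraph V) (F : Finset (Sym2 V)) (g : (V → Bool) → ℝ) :
    ∑ σ : V → Bool, Delta G F σ * g σ
      = ∑ ε : (openSub G F).ConnectedComponent → Bool,
          g (fun v => ε ((openSub G F).connectedComponentMk v)) := by
  have h1 : ∀ σ : V → Bool, Delta G F σ * g σ =
      if (∀ i j, G.Adj i j → s(i, j) ∈ F → σ i = σ j) then g σ else 0 := by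
    intro σ
    unfold Delta
    split <;> simp_all
  simp_rw [h1]
  rw [← Finset.sum_filter]
  refine Finset.sum_nbij' (fun σ => fun c => σ c.out)
    (fun ε => fun v => ε ((openSub G F).connectedComponentMk v)) ?_ ?_ ?_ ?_ ?_
  · intro a _; exact Finset.mem_univ _
  · intro ε _
    simp only [Finset.mem_filter, Finset.mem_univ, true_and]
    intro i j hadj hmem
    have : (openSub G F).connectedComponentMk i = (openSub G F).connectedComponentMk j :=
      SimpleGraph.ConnectedComponent.eq.mpr (SimpleGraph.Adj.reachable ⟨hadj, hmem⟩)
    rw [this]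
  · intro σ hσ
    simp only [Finset.mem_filter, Finset.mem_univ, true_and] at hσ
    funext v
    refine sigma_const_of hσ (SimpleGraph.ConnectedComponent.eq.mp ?_)
    exact ((openSub G F).connectedComponentMk v).out_eq
  · intro ε _
    funext c
    exact congrArg ε c.out_eq
  · intro σ hσ
    simp only [Finset.mem_filter, Finset.mem_univ, true_and] at hσ
    congr 1
    funext v
    refine sigma_const_of hσ (SimpleGraph.ConnectedComponent.eq.mp ?_)
    exact ((openSub G F).connectedComponentMk v).out_eq.symm

/-- Grouping the field sum by connected components. -/
lemma field_sum (H : SimpleGraph V) (h : V → ℝ) (ε : H.ConnectedComponent → Bool) :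
    ∑ i, h i * spin (ε (H.connectedComponentMk i))
      = ∑ c, (∑ i ∈ compSupp H c, h i) * spin (ε c) := by
  rw [← Finset.sum_fiberwise Finset.univ (fun i => H.connectedComponentMk i)
      (fun i => h i * spin (ε (H.connectedComponentMk i)))]
  refine Finset.sum_congr rfl fun c _ => ?_
  rw [Finset.sum_mul]
  have hsupp : compSupp H c = Finset.univ.filter (fun i => H.connectedComponentMk i = c) := by
    unfold compSupp
    congr 1
  rw [hsupp]
  refine Finset.sum_congr rfl fun i hi => ?_
  simp only [Finset.mem_filter] at hi
  rw [hi.2]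

lemma prod_sum_bool {C : Type} [Fintype C] [DecidableEq C] (f : C → Bool → ℝ) :
    ∑ ε : C → Bool, ∏ c, f c (ε c) = ∏ c, ∑ b, f c b := by
  rw [Finset.prod_univ_sum (fun _ => (Finset.univ : Finset Bool)) f, Fintype.piFinset_univ]

/-- Partition-function factorization over components. -/
lemma Zcomp (G : SimpleGraph V) (β : ℝ) (h : V → ℝ) (F : Finset (Sym2 V)) :
    ∑ σ : V → Bool, Delta G F σ * Real.exp (β * ∑ i, h i * spin (σ i))
      = ∏ c : (openSub G F).ConnectedComponent,
          2 * Real.cosh (β * ∑ i ∈ compSupp (openSub G F) c, h i) := by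
  rw [sum_delta]
  have key : ∀ ε : (openSub G F).ConnectedComponent → Bool,
      Real.exp (β * ∑ i, h i * spin (ε ((openSub G F).connectedComponentMk i)))
        = ∏ c, Real.exp (spin (ε c) * (β * ∑ i ∈ compSupp (openSub G F) c, h i)) := by
    intro ε
    rw [field_sum, Finset.mul_sum, ← Real.exp_sum]
    congr 1
    refine Finset.sum_congr rfl fun c _ => ?_
    ring
  simp_rw [key]
  rw [prod_sum_bool (fun c b => Real.exp (spin b * (β * ∑ i ∈ compSupp (openSub G F) c, h i)))]
  exact Finset.prod_congr rfl fun c _ => sum_exp_spin _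

/-- Correlation factorization over components. -/
lemma Scomp (G : SimpleGraph V) (β : ℝ) (h : V → ℝ) (F : Finset (Sym2 V)) (x y : V) :
    ∑ σ : V → Bool, Delta G F σ *
        (spin (σ x) * spin (σ y) * Real.exp (β * ∑ i, h i * spin (σ i)))
      = ((if (openSub G F).Reachable x y then 1 else 0)
          + (if ¬ (openSub G F).Reachable x y then 1 else 0) *
              Real.tanh (hK G β h F x) * Real.tanh (hK G β h F y)) *
        ∏ c : (openSub G F).ConnectedComponent,
          2 * Real.cosh (β * ∑ i ∈ compSupp (openSub G F) c, h i) := by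
  set H := openSub G F with hH
  set cx := H.connectedComponentMk x with hcx
  set cy := H.connectedComponentMk y with hcy
  set w : H.ConnectedComponent → ℝ := fun c => β * ∑ i ∈ compSupp H c, h i with hw
  rw [sum_delta]
  have key : ∀ ε : H.ConnectedComponent → Bool,
      Real.exp (β * ∑ i, h i * spin (ε (H.connectedComponentMk i)))
        = ∏ c, Real.exp (spin (ε c) * w c) := by
    intro ε
    rw [field_sum, Finset.mul_sum, ← Real.exp_sum]
    congr 1
    refine Finset.sum_congr rfl fun c _ => ?_
    ring
  rw [← hH]
  simp_rw [key]
  rw [← hcx, ← hcy]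
  by_cases hr : H.Reachable x y
  · have hcc : cx = cy := SimpleGraph.ConnectedComponent.eq.mpr hr
    have : ∀ ε : H.ConnectedComponent → Bool,
        spin (ε cx) * spin (ε cy) * ∏ c, Real.exp (spin (ε c) * w c)
          = ∏ c, Real.exp (spin (ε c) * w c) := by
      intro ε
      rw [hcc]
      have : spin (ε cy) * spin (ε cy) = 1 := by cases ε cy <;> simp [spin]
      rw [this, one_mul]
    rw [Finset.sum_congr rfl fun ε _ => this ε]
    rw [prod_sum_bool (fun c b => Real.exp (spin b * w c))]
    rw [if_pos hr, if_neg (not_not_intro hr)]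
    simp only [zero_mul, add_zero, one_mul]
    exact Finset.prod_congr rfl fun c _ => sum_exp_spin _
  · have hcc : cx ≠ cy := fun hcc => hr (SimpleGraph.ConnectedComponent.eq.mp hcc)
    have step1 : ∀ ε : H.ConnectedComponent → Bool,
        spin (ε cx) * spin (ε cy) * ∏ c, Real.exp (spin (ε c) * w c)
          = ∏ c, ((if c = cx then spin (ε c) else 1) * (if c = cy then spin (ε c) else 1)
              * Real.exp (spin (ε c) * w c)) := by
      intro ε
      rw [Finset.prod_mul_distrib, Finset.prod_mul_distrib,
        Finset.prod_ite_eq' Finset.univ cx (fun c => spin (ε c)),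
        Finset.prod_ite_eq' Finset.univ cy (fun c => spin (ε c))]
      simp
    rw [Finset.sum_congr rfl fun ε _ => step1 ε]
    rw [prod_sum_bool (fun c b => (if c = cx then spin b else 1) * (if c = cy then spin b else 1)
      * Real.exp (spin b * w c)), if_neg hr, if_pos (by exact hr)]
    simp only [zero_add, one_mul]
    -- now: ∏ c, ∑ b, (...) = tanh (w cx) * tanh (w cy) * ∏ c, 2cosh (w c)
    have hmemx : cx ∈ (Finset.univ : Finset H.ConnectedComponent) := Finset.mem_univ _
    have hmemy : cy ∈ (Finset.univ.erase cx) := Finset.mem_erase.mpr ⟨hcc.symm ∘ Eq.symm ∘ Eq.symm, Finset.mem_univ _⟩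
    have split : ∀ g : H.ConnectedComponent → ℝ,
        ∏ c, g c = g cx * (g cy * ∏ c ∈ (Finset.univ.erase cx).erase cy, g c) := by
      intro g
      rw [Finset.mul_prod_erase _ g hmemy, Finset.mul_prod_erase _ g hmemx]
    rw [split, split (fun c => 2 * Real.cosh (w c))]
    have hx' : ∑ b, ((if cx = cx then spin b else 1) * (if cx = cy then spin b else 1)
        * Real.exp (spin b * w cx)) = 2 * Real.sinh (w cx) := by
      rw [← sum_spin_exp (w cx)]
      refine Finset.sum_congr rfl fun b _ => ?_
      rw [if_pos rfl, if_neg hcc]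
      ring
    have hy' : ∑ b, ((if cy = cx then spin b else 1) * (if cy = cy then spin b else 1)
        * Real.exp (spin b * w cy)) = 2 * Real.sinh (w cy) := by
      rw [← sum_spin_exp (w cy)]
      refine Finset.sum_congr rfl fun b _ => ?_
      rw [if_pos rfl, if_neg (Ne.symm hcc)]
      ring
    have hrest : ∏ c ∈ (Finset.univ.erase cx).erase cy,
        (∑ b, ((if c = cx then spin b else 1) * (if c = cy then spin b else 1)
          * Real.exp (spin b * w c)))
        = ∏ c ∈ (Finset.univ.erase cx).erase cy, 2 * Real.cosh (w c) := by
      refine Finset.prod_congr rfl fun c hc => ?_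
      simp only [Finset.mem_erase] at hc
      rw [show (∑ b, ((if c = cx then spin b else 1) * (if c = cy then spin b else 1)
          * Real.exp (spin b * w c))) = ∑ b, Real.exp (spin b * w c) from
        Finset.sum_congr rfl fun b _ => by rw [if_neg hc.2.1, if_neg hc.1]; ring]
      exact sum_exp_spin _
    rw [hx', hy', hrest]
    have hkx : hK G β h F x = w cx := rfl
    have hky : hK G β h F y = w cy := rfl
    rw [hkx, hky, Real.tanh_eq_sinh_div_cosh, Real.tanh_eq_sinh_div_cosh]
    have c1 := Real.cosh_pos (w cx)
    have c2 := Real.cosh_pos (w cy)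
    field_simp

lemma prod_eDelta (G : SimpleGraph V) [DecidableRel G.Adj] {F : Finset (Sym2 V)}
    (hF : F ⊆ G.edgeFinset) (σ : V → Bool) :
    ∏ e ∈ F, eDelta σ e = Delta G F σ := by
  have h1 : ∀ e ∈ F, eDelta σ e = if eDelta σ e = 1 then 1 else 0 := by
    intro e _
    induction e using Sym2.ind with
    | _ i j =>
      rw [eDelta_mk]
      split <;> simp
  rw [Finset.prod_congr rfl h1, Finset.prod_boole]
  unfold Delta
  have key : (∀ e ∈ F, eDelta σ e = 1) ↔ (∀ i j, G.Adj i j → s(i, j) ∈ F → σ i = σ j) := by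
    constructor
    · intro H i j hadj hmem
      have := H _ hmem
      rw [eDelta_mk] at this
      by_contra hne
      rw [if_neg hne] at this
      norm_num at this
    · intro H e he
      have hadj := SimpleGraph.mem_edgeFinset.mp (hF he)
      induction e using Sym2.ind with
      | _ i j =>
        rw [eDelta_mk, if_pos (H i j (G.mem_edgeSet.mp hadj) he)]
  split_ifs with h1 h2 h2
  · rfl
  · exact absurd (key.mp h1) h2
  · exact absurd (key.mpr h2) h1
  · rfl

lemma edge_factor {β : ℝ} {J p : Sym2 V → ℝ} (hp : ∀ e, p e = 1 - Real.exp (-(2 * β) * J e))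
    (σ : V → Bool) (e : Sym2 V) :
    Real.exp (2 * β * (J e * eDelta σ e))
      = Real.exp (2 * β * J e) * (p e * eDelta σ e + (1 - p e)) := by
  induction e using Sym2.ind with
  | _ i j =>
    rw [eDelta_mk, hp]
    split
    · rw [mul_one, mul_one]
      ring_nf
    · rw [mul_zero, mul_zero, mul_zero, Real.exp_zero, sub_sub_cancel, zero_add,
        ← Real.exp_add]
      ring_nf
      rw [Real.exp_zero]

lemma potts_expand (G : SimpleGraph V) [DecidableRel G.Adj] (β : ℝ) (J p : Sym2 V → ℝ)
    (hp : ∀ e, p e = 1 - Real.exp (-(2 * β) * J e)) (σ : V → Bool) :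
    ∏ e ∈ G.edgeFinset, Real.exp (2 * β * (J e * eDelta σ e))
      = (∏ e ∈ G.edgeFinset, Real.exp (2 * β * J e)) *
          ∑ F ∈ G.edgeFinset.powerset, bern G p F * Delta G F σ := by
  rw [Finset.prod_congr rfl (fun e _ => edge_factor hp σ e), Finset.prod_mul_distrib]
  congr 1
  rw [Finset.prod_add]
  refine Finset.sum_congr rfl fun F hF => ?_
  have hF' : F ⊆ G.edgeFinset := Finset.mem_powerset.mp hF
  rw [Finset.prod_mul_distrib, prod_eDelta G hF' σ]
  unfold bern
  ring

def e2 : Fin 2 ≃ Bool where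
  toFun a := decide (a = 0)
  invFun b := if b then 0 else 1
  left_inv := by decide
  right_inv := by decide

lemma eDelta_e2 (τ : V → Fin 2) (e : Sym2 V) :
    eDelta (fun v => e2 (τ v)) e = eDelta τ e := by
  induction e using Sym2.ind with
  | _ i j =>
    rw [eDelta_mk, eDelta_mk]
    congr 1
    simp only [eq_iff_iff]
    exact ⟨fun hh => e2.injective hh, fun hh => by rw [hh]⟩

lemma pottsW2_eq (G : SimpleGraph V) [DecidableRel G.Adj] (β : ℝ) (J : Sym2 V → ℝ)
    (h : V → ℝ) (τ : V → Fin 2) :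
    pottsW2 G β J h τ
      = (∏ e ∈ G.edgeFinset, Real.exp (2 * β * (J e * eDelta (fun v => e2 (τ v)) e)))
          * Real.exp (β * ∑ i, h i * spin (e2 (τ i))) := by
  unfold pottsW2
  rw [← Real.exp_sum, ← Real.exp_add]
  congr 1
  have hterm : ∀ a : Fin 2, ((if a = 0 then (1 : ℝ) else 0) - if a = 1 then 1 else 0)
      = spin (e2 a) := by
    intro a
    fin_cases a <;> simp [spin, e2]
  simp_rw [hterm]
  have hdel : ∀ e ∈ G.edgeFinset,
      2 * β * (J e * eDelta (fun v => e2 (τ v)) e) = 2 * β * (J e * eDelta τ e) := by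
    intro e _
    rw [eDelta_e2]
  rw [Finset.sum_congr rfl hdel, ← Finset.mul_sum]
  rw [show (∑ i, h i * spin (e2 (τ i))) = 2 * ∑ i, h i / 2 * spin (e2 (τ i)) from by
    rw [Finset.mul_sum]; exact Finset.sum_congr rfl fun i _ => by ring]
  ring

end ESaux

open scoped Classical in
/-- Theorem (Correlation-connectivity): the two-point function of the 2-state
Potts model at inverse temperature `2β` in terms of the random-cluster measure. -/
theorem statement8 [Fintype V] [DecidableEq V]
    (G : SimpleGraph V) [DecidableRel G.Adj]
    (β : ℝ) (hβ : 0 < β)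
    (J : Sym2 V → ℝ) (hJ : ∀ e ∈ G.edgeFinset, 0 ≤ J e)
    (h : V → ℝ)
    (p : Sym2 V → ℝ) (hp : ∀ e, p e = 1 - Real.exp (-(2 * β) * J e))
    (x y : V) (hxy : x ≠ y) :
    (∑ τ ∈ Finset.univ.filter (fun τ : V → Fin 2 => τ x = τ y),
          pottsW2 G β J h τ) / (∑ τ : V → Fin 2, pottsW2 G β J h τ) - 1 / 2
      = 1 / 2 * rcE G β p h
            (fun F => if (openSub G F).Reachable x y then 1 else 0)
        + 1 / 2 * rcE G β p h
            (fun F => (if ¬ (openSub G F).Reachable x y then 1 else 0) *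
              Real.tanh (hK G β h F x) * Real.tanh (hK G β h F y)) := by
  classical
  set Wb : (V → Bool) → ℝ := fun σ =>
    (∏ e ∈ G.edgeFinset, Real.exp (2 * β * (J e * eDelta σ e)))
      * Real.exp (β * ∑ i, h i * spin (σ i)) with hWb
  have hpotts : ∀ τ : V → Fin 2, pottsW2 G β J h τ = Wb (fun v => e2 (τ v)) :=
    fun τ => pottsW2_eq G β J h τ
  set C : ℝ := ∏ e ∈ G.edgeFinset, Real.exp (2 * β * J e) with hC
  have hCpos : 0 < C := Finset.prod_pos fun e _ => Real.exp_pos _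
  set E : (V → Bool) → ℝ := fun σ => Real.exp (β * ∑ i, h i * spin (σ i)) with hE
  have hWexp : ∀ σ : V → Bool, Wb σ =
      ∑ F ∈ G.edgeFinset.powerset, C * bern G p F * (Delta G F σ * E σ) := by
    intro σ
    rw [hWb]
    simp only
    rw [potts_expand G β J p hp σ, ← hC, Finset.mul_sum, Finset.sum_mul]
    exact Finset.sum_congr rfl fun F _ => by rw [hE]; ring
  set D : ℝ := ∑ F ∈ G.edgeFinset.powerset, rcW G β p h F with hD
  -- key 1 : partition function
  have key1 : ∑ σ : V → Bool, Wb σ = C * D := by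
    simp_rw [hWexp]
    rw [Finset.sum_comm, hD, Finset.mul_sum]
    refine Finset.sum_congr rfl fun F _ => ?_
    rw [← Finset.mul_sum]
    simp only [hE]
    rw [show (∑ σ : V → Bool, Delta G F σ * Real.exp (β * ∑ i, h i * spin (σ i)))
        = ∏ c : (openSub G F).ConnectedComponent,
            2 * Real.cosh (β * ∑ i ∈ compSupp (openSub G F) c, h i) from Zcomp G β h F]
    unfold rcW
    ring
  -- key 2 : correlation
  set f1 : Finset (Sym2 V) → ℝ := fun F => if (openSub G F).Reachable x y then 1 else 0 with hf1
  set f2 : Finset (Sym2 V) → ℝ := fun F => (if ¬ (openSub G F).Reachable x y then 1 else 0) *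
      Real.tanh (hK G β h F x) * Real.tanh (hK G β h F y) with hf2
  have key2 : ∑ σ : V → Bool, spin (σ x) * spin (σ y) * Wb σ
      = C * ∑ F ∈ G.edgeFinset.powerset, (f1 F + f2 F) * rcW G β p h F := by
    have hsw : ∀ σ : V → Bool, spin (σ x) * spin (σ y) * Wb σ
        = ∑ F ∈ G.edgeFinset.powerset,
            C * bern G p F * (Delta G F σ * (spin (σ x) * spin (σ y) * E σ)) := by
      intro σ
      rw [hWexp σ, Finset.mul_sum]
      exact Finset.sum_congr rfl fun F _ => by ring
    simp_rw [hsw]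
    rw [Finset.sum_comm, Finset.mul_sum]
    refine Finset.sum_congr rfl fun F _ => ?_
    rw [← Finset.mul_sum]
    simp only [hE]
    rw [show (∑ σ : V → Bool, Delta G F σ *
          (spin (σ x) * spin (σ y) * Real.exp (β * ∑ i, h i * spin (σ i))))
        = (f1 F + f2 F) * ∏ c : (openSub G F).ConnectedComponent,
            2 * Real.cosh (β * ∑ i ∈ compSupp (openSub G F) c, h i) from Scomp G β h F x y]
    unfold rcW
    ring
  -- positivity
  have hWpos : ∀ σ : V → Bool, 0 < Wb σ := fun σ =>
    mul_pos (Finset.prod_pos fun e _ => Real.exp_pos _) (Real.exp_pos _)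
  have hZpos : 0 < ∑ σ : V → Bool, Wb σ :=
    Finset.sum_pos (fun σ _ => hWpos σ) Finset.univ_nonempty
  have hDne : D ≠ 0 := by
    intro h0
    rw [key1, h0, mul_zero] at hZpos
    exact lt_irrefl 0 hZpos
  -- rewrite Potts sums
  have hZ : ∑ τ : V → Fin 2, pottsW2 G β J h τ = ∑ σ : V → Bool, Wb σ := by
    refine Fintype.sum_equiv (Equiv.arrowCongr (Equiv.refl V) e2) _ _ fun τ => ?_
    rw [hpotts]
    rfl
  have hN : ∑ τ ∈ Finset.univ.filter (fun τ : V → Fin 2 => τ x = τ y), pottsW2 G β J h τ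
      = ((∑ σ : V → Bool, Wb σ) + ∑ σ : V → Bool, spin (σ x) * spin (σ y) * Wb σ) / 2 := by
    rw [Finset.sum_filter]
    rw [show (∑ τ : V → Fin 2, if τ x = τ y then pottsW2 G β J h τ else 0)
        = ∑ σ : V → Bool, if σ x = σ y then Wb σ else 0 from ?_]
    · rw [← Finset.sum_add_distrib, Finset.sum_div]
      refine Finset.sum_congr rfl fun σ _ => ?_
      cases hx : σ x <;> cases hy : σ y <;> simp [spin, hx, hy] <;> ring
    · refine Fintype.sum_equiv (Equiv.arrowCongr (Equiv.refl V) e2) _ _ fun τ => ?_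
      rw [hpotts]
      show (if τ x = τ y then Wb (fun v => e2 (τ v)) else 0)
        = if e2 (τ x) = e2 (τ y) then Wb (fun v => e2 (τ v)) else 0
      exact if_congr ⟨fun hh => by rw [hh], fun hh => e2.injective hh⟩ rfl rfl
  -- final algebra
  rw [hN, hZ, key1, key2]
  unfold rcE
  rw [← hD]
  have hAB : ∑ F ∈ G.edgeFinset.powerset, (f1 F + f2 F) * rcW G β p h F
      = (∑ F ∈ G.edgeFinset.powerset, f1 F * rcW G β p h F)
        + ∑ F ∈ G.edgeFinset.powerset, f2 F * rcW G β p h F := by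
    rw [← Finset.sum_add_distrib]
    exact Finset.sum_congr rfl fun F _ => by ring
  rw [hAB]
  have hCne : C ≠ 0 := ne_of_gt hCpos
  field_simp
  ring

end
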